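/- If α₁, α₂, …, α_r are roots of a crystallographic root system Φ and α₁ + α₂ + … + α_r = α is also a root of Φ, then either α₁ = α, or there exists an index i with 2 ≤ i ≤ r such that α₁ + α_i is a root or zero. -/

import Mathlib

open scoped Pointwise RealInnerProductSpace

/-- A crystallographic root system together with a choice of simple system. -/
structure RootSystemData (V : Type*) [NormedAddCommGroup V] [InnerProductSpace ℝ V] where
  Φ : Set V
  S : Set V
  finite : Φ.Finite
  ne_zero : ∀ α ∈ Φ, α ≠ 0
  reflect_mem : ∀ α ∈ Φ, ∀ β ∈ Φ, β - (2 * (inner ℝ β α : ℝ) / (inner ℝ α α : ℝ)) • α ∈ Φ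
  crystal : ∀ α ∈ Φ, ∀ β ∈ Φ, ∃ m : ℤ, 2 * (inner ℝ β α : ℝ) / (inner ℝ α α : ℝ) = (m : ℝ)
  reduced : ∀ α ∈ Φ, ∀ t : ℝ, t • α ∈ Φ → t = 1 ∨ t = -1
  S_sub : S ⊆ Φ
  S_indep : LinearIndependent ℝ ((↑) : S → V)
  decomp : ∀ α ∈ Φ, α ∈ AddSubmonoid.closure S ∨ -α ∈ AddSubmonoid.closure S

namespace RootSystemData

variable {V : Type*} [NormedAddCommGroup V] [InnerProductSpace ℝ V] (D : RootSystemData V)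

/-- The positive roots. -/
def pos : Set V := {α ∈ D.Φ | α ∈ AddSubmonoid.closure D.S}

/-- The root poset order: `α ≤ β` iff `β - α` is a nonnegative integer combination
of simple roots. -/
def rle (α β : V) : Prop := β - α ∈ AddSubmonoid.closure D.S

/-- An (order) ideal of the root poset. -/
def IsIdeal (I : Set V) : Prop :=
  I ⊆ D.pos ∧ ∀ α ∈ I, ∀ β ∈ D.pos, D.rle β α → β ∈ I

/-- The order filters complementary to a chain of ideals, with the conventions
`J 0 = Φ⁺` (as `I 0 = ∅`) and `J i = J k` for `i > k`. -/
def Jf (k : ℕ) (I : ℕ → Set V) (i : ℕ) : Set V := D.pos \ I (min i k)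

/-- A geometric chain of `k` ideals in the root poset. -/
structure IsGeomChain (k : ℕ) (I : ℕ → Set V) : Prop where
  zero : I 0 = ∅
  ideal : ∀ i, 1 ≤ i → i ≤ k → D.IsIdeal (I i)
  mono : ∀ i j, i ≤ j → j ≤ k → I i ⊆ I j
  geomI : ∀ i j, i + j ≤ k → (I i + I j) ∩ D.pos ⊆ I (i + j)
  geomJ : ∀ i j, (D.Jf k I i + D.Jf k I j) ∩ D.pos ⊆ D.Jf k I (i + j)

/-- A chain of ideals is positive if `S ⊆ I k`. -/
def IsPositiveChain (k : ℕ) (I : ℕ → Set V) : Prop := D.S ⊆ I k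

/-- The set of values `r₁ + … + r_m` over all expressions `α = α₁ + … + α_m` with
`α_i ∈ I (r i)` and `1 ≤ r i ≤ k`; its least element (when it exists) is `r_α(𝓘)`. -/
def rVals (_D : RootSystemData V) (k : ℕ) (I : ℕ → Set V) (α : V) : Set ℕ :=
  {N | ∃ m : ℕ, ∃ a : Fin m → V, ∃ r : Fin m → ℕ,
    (∀ i, 1 ≤ r i ∧ r i ≤ k ∧ a i ∈ I (r i)) ∧ (∑ i, a i) = α ∧ (∑ i, r i) = N}

/-- The extension `𝓘̲` of a geometric chain of `k` ideals to a chain of `k+1` ideals,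
with `I̲_{k+1} = ⋃_{i+j=k+1} ((I_i + I_j) ∩ Φ⁺) ∪ I_k ∪ S`. -/
def Ibar (k : ℕ) (I : ℕ → Set V) : ℕ → Set V := fun i =>
  if i ≤ k then I i
  else (⋃ (p : ℕ × ℕ) (_ : p.1 + p.2 = k + 1), (I p.1 + I p.2) ∩ D.pos) ∪ I k ∪ D.S

/-- `α` is a rank `r` indecomposable element of the chain of ideals `I`. -/
def IsIndec (k : ℕ) (I : ℕ → Set V) (r : ℕ) (α : V) : Prop :=
  α ∈ I r ∧ IsLeast (D.rVals k I α) r ∧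
  (∀ i j, i + j = r → α ∉ I i + I j) ∧
  (∀ β ∈ D.pos, ∀ t, t ≤ k → IsLeast (D.rVals k I (α + β)) t → β ∈ I (t - r))

/-- The complement of the `k`-Catalan arrangement of `Φ`. -/
def catComp (k : ℕ) : Set V :=
  {x | ∀ α ∈ D.Φ, ∀ r : ℕ, r ≤ k → (inner ℝ x α : ℝ) ≠ (r : ℝ)}

/-- A region of the `k`-Catalan arrangement: a connected component of the complement. -/
def IsRegion (k : ℕ) (R : Set V) : Prop :=
  ∃ x ∈ D.catComp k, R = connectedComponentIn (D.catComp k) x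

/-- A dominant region of the `k`-Catalan arrangement. -/
def IsDomRegion (k : ℕ) (R : Set V) : Prop :=
  D.IsRegion k R ∧ ∀ x ∈ R, ∀ α ∈ D.pos, 0 < (inner ℝ x α : ℝ)

/-- The complement of the affine Coxeter arrangement of `Φ`. -/
def affComp : Set V := {x | ∀ α ∈ D.Φ, ∀ r : ℤ, (inner ℝ x α : ℝ) ≠ (r : ℝ)}

/-- An alcove: a connected component of the complement of the affine Coxeter arrangement. -/
def IsAlcove (A : Set V) : Prop :=
  ∃ x ∈ D.affComp, A = connectedComponentIn D.affComp x

/-- The hyperplane `H_α^r` supports a facet of `R`. -/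
def IsWall (_D : RootSystemData V) (R : Set V) (α : V) (r : ℝ) : Prop :=
  ∃ x, (inner ℝ x α : ℝ) = r ∧ ∃ ε > 0, ∀ y, (inner ℝ y α : ℝ) = r → dist y x < ε → y ∈ closure R

/-- `H_α^r` is a ceiling of the dominant region (or alcove) `R`: a wall not through
the origin with `R` on the same side as the origin. -/
def IsCeiling (R : Set V) (α : V) (r : ℝ) : Prop :=
  D.IsWall R α r ∧ 0 < r ∧ ∀ x ∈ R, (inner ℝ x α : ℝ) < r

/-- `H_α^r` is a floor of the dominant region (or alcove) `R`: a wall not through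
the origin separating `R` from the origin. -/
def IsFloor (R : Set V) (α : V) (r : ℝ) : Prop :=
  D.IsWall R α r ∧ 0 < r ∧ ∀ x ∈ R, r < (inner ℝ x α : ℝ)

/-- The chain of ideals `θ(R)` associated to a dominant region `R`. -/
def theta (R : Set V) : ℕ → Set V := fun i =>
  {α ∈ D.pos | ∀ x ∈ R, (inner ℝ x α : ℝ) < (i : ℝ)}

/-- `B` is the maximal alcove of the (bounded) region corresponding to the positive chain
of ideals `I`, i.e. the alcove with `r(B,α) = r_α(𝓘)` for all positive roots `α`. -/
def IsMaxAlcoveOf (k : ℕ) (I : ℕ → Set V) (B : Set V) : Prop :=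
  D.IsAlcove B ∧ ∀ α ∈ D.pos, ∃ r : ℕ, IsLeast (D.rVals k I α) r ∧
    ∀ x ∈ B, ((r : ℝ) - 1 < (inner ℝ x α : ℝ) ∧ (inner ℝ x α : ℝ) < (r : ℝ))

/-- The root system `Φ` is irreducible. -/
def Irred : Prop :=
  ∀ Φ₁ Φ₂ : Set V, Φ₁ ∪ Φ₂ = D.Φ → (∀ a ∈ Φ₁, ∀ b ∈ Φ₂, (inner ℝ a b : ℝ) = 0) →
    Φ₁ = ∅ ∨ Φ₂ = ∅

end RootSystemData


/-- If `α₁,…,α_r ∈ Φ` and `α₁ + … + α_r = α ∈ Φ`, then `α₁ = α` or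
there is `i` with `2 ≤ i ≤ r` such that `α₁ + α_i ∈ Φ ∪ {0}`. -/
private theorem inner_self_pos' {V : Type*} [NormedAddCommGroup V] [InnerProductSpace ℝ V]
    {x : V} (hx : x ≠ 0) : (0:ℝ) < inner ℝ x x :=
  lt_of_le_of_ne real_inner_self_nonneg
    (fun h => hx ((inner_self_eq_zero (𝕜 := ℝ)).1 h.symm))

private theorem key_lemma {V : Type*} [NormedAddCommGroup V] [InnerProductSpace ℝ V]
    (D : RootSystemData V) {x y : V} (hx : x ∈ D.Φ) (hy : y ∈ D.Φ)
    (hxy : (inner ℝ x y : ℝ) < 0) : x + y ∈ D.Φ ∨ x + y = 0 := by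
  have hx0 : x ≠ 0 := D.ne_zero x hx
  have hy0 : y ≠ 0 := D.ne_zero y hy
  have hxx : (0:ℝ) < inner ℝ x x := inner_self_pos' hx0
  have hyy : (0:ℝ) < inner ℝ y y := inner_self_pos' hy0
  obtain ⟨m, hm⟩ := D.crystal y hy x hx
  obtain ⟨n, hn⟩ := D.crystal x hx y hy
  rw [real_inner_comm x y] at hn
  have hmneg : m < 0 := by
    have : (m:ℝ) < 0 := by
      rw [← hm]; exact div_neg_of_neg_of_pos (by linarith) hyy
    exact_mod_cast this
  have hnneg : n < 0 := by
    have : (n:ℝ) < 0 := by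
      rw [← hn]
      exact div_neg_of_neg_of_pos (by linarith) hxx
    exact_mod_cast this
  by_cases hm1 : m = -1
  · left
    have := D.reflect_mem y hy x hx
    rw [hm, hm1] at this
    simpa [sub_eq_add_neg, neg_smul] using this
  by_cases hn1 : n = -1
  · left
    have := D.reflect_mem x hx y hy
    rw [real_inner_comm x y, hn, hn1] at this
    have h2 : y + x ∈ D.Φ := by
      simpa [sub_eq_add_neg, neg_smul] using this
    rwa [add_comm] at h2
  have hm2 : (m:ℝ) ≤ -2 := by
    have : m ≤ -2 := by omega
    exact_mod_cast this
  have hn2 : (n:ℝ) ≤ -2 := by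
    have : n ≤ -2 := by omega
    exact_mod_cast this
  -- equality in Cauchy-Schwarz
  have hyy' : (inner ℝ y y : ℝ) ≠ 0 := ne_of_gt hyy
  have hxx' : (inner ℝ x x : ℝ) ≠ 0 := ne_of_gt hxx
  have hmB : 2 * (inner ℝ x y : ℝ) = (m:ℝ) * (inner ℝ y y : ℝ) := by
    field_simp at hm; linarith [hm]
  have hnA : 2 * (inner ℝ x y : ℝ) = (n:ℝ) * (inner ℝ x x : ℝ) := by
    field_simp at hn; linarith [hn]
  have hmn : (4:ℝ) ≤ (m:ℝ) * (n:ℝ) := by nlinarith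
  have hpp : (2*(inner ℝ x y:ℝ))*(2*(inner ℝ x y:ℝ))
      = ((m:ℝ)*(inner ℝ y y:ℝ))*((n:ℝ)*(inner ℝ x x:ℝ)) := by rw [← hmB, ← hnA]
  have hge : (inner ℝ x x : ℝ) * (inner ℝ y y : ℝ) ≤ (inner ℝ x y : ℝ) * (inner ℝ x y : ℝ) := by
    nlinarith [hpp, mul_pos hxx hyy,
      mul_le_mul_of_nonneg_right hmn (le_of_lt (mul_pos hyy hxx))]
  have hle := real_inner_mul_inner_self_le x y
  have heq : |(inner ℝ x y : ℝ)| = ‖x‖ * ‖y‖ := by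
    have h1 : (inner ℝ x y : ℝ) * (inner ℝ x y : ℝ) = (inner ℝ x x : ℝ) * (inner ℝ y y : ℝ) :=
      le_antisymm hle hge
    have h2 : |(inner ℝ x y : ℝ)| ^ 2 = (‖x‖ * ‖y‖) ^ 2 := by
      rw [sq_abs]
      rw [real_inner_self_eq_norm_mul_norm, real_inner_self_eq_norm_mul_norm] at h1
      ring_nf
      ring_nf at h1
      linarith [h1]
    have := abs_nonneg (inner ℝ x y : ℝ)
    have hnn : (0:ℝ) ≤ ‖x‖ * ‖y‖ := by positivity
    nlinarith [h2]
  obtain ⟨t, ht0, hty⟩ := (norm_inner_eq_norm_iff (𝕜 := ℝ) hx0 hy0).1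
    (by rwa [Real.norm_eq_abs])
  have hmem : t • x ∈ D.Φ := by rwa [← hty]
  rcases D.reduced x hx t hmem with h1 | h1
  · exfalso
    rw [hty, h1, one_smul] at hxy
    linarith
  · right
    rw [hty, h1, neg_one_smul]
    abel

private theorem claim_lemma {V : Type*} [NormedAddCommGroup V] [InnerProductSpace ℝ V]
    (D : RootSystemData V) {ι : Type*} [DecidableEq ι] :
    ∀ (T : Finset ι) (a : ι → V), (∀ i ∈ T, a i ∈ D.Φ) → ∀ γ ∈ D.Φ,
      (∑ i ∈ T, a i) ≠ 0 → γ + ∑ i ∈ T, a i ∈ D.Φ →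
      ∃ i ∈ T, γ + a i ∈ D.Φ ∨ γ + a i = 0 := by
  intro T
  induction T using Finset.strongInduction with
  | _ T IH =>
    intro a haT γ hγ hsne hgs
    by_contra hcon
    push_neg at hcon
    have hge0 : ∀ i ∈ T, (0:ℝ) ≤ inner ℝ γ (a i) := by
      intro i hi
      by_contra hlt
      push_neg at hlt
      rcases key_lemma D hγ (haT i hi) hlt with h | h
      · exact (hcon i hi).1 h
      · exact (hcon i hi).2 h
    set β := ∑ i ∈ T, a i with hβ
    have hγ0 : γ ≠ 0 := D.ne_zero γ hγ
    have hγγ : (0:ℝ) < inner ℝ γ γ := inner_self_pos' hγ0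
    have hββ : (0:ℝ) < inner ℝ β β := inner_self_pos' hsne
    have hγβ : (0:ℝ) ≤ (inner ℝ γ β : ℝ) := by
      rw [hβ, inner_sum]
      exact Finset.sum_nonneg hge0
    have hpos : (0:ℝ) < inner ℝ β (γ + β) := by
      rw [inner_add_right, real_inner_comm γ β]
      linarith
    have hsum_pos : (0:ℝ) < ∑ i ∈ T, (inner ℝ (a i) (γ + β) : ℝ) := by
      rw [← sum_inner, ← hβ]; exact hpos
    obtain ⟨i, hiT, hip⟩ : ∃ i ∈ T, (0:ℝ) < inner ℝ (a i) (γ + β) := by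
      by_contra hc
      push_neg at hc
      have : (∑ i ∈ T, (inner ℝ (a i) (γ + β) : ℝ)) ≤ 0 := Finset.sum_nonpos hc
      linarith
    have hnegai : -a i ∈ D.Φ := by
      have := D.reflect_mem (a i) (haT i hiT) (a i) (haT i hiT)
      have hne : ((inner ℝ (a i) (a i) : ℝ)) ≠ 0 :=
        ne_of_gt (inner_self_pos' (D.ne_zero _ (haT i hiT)))
      rw [mul_div_assoc, div_self hne, mul_one] at this
      convert this using 1
      module
    have hlt : (inner ℝ (γ + β) (-a i) : ℝ) < 0 := by
      rw [inner_neg_right, real_inner_comm]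
      linarith
    rcases key_lemma D hgs hnegai hlt with h | h
    · -- γ + β - a i ∈ Φ
      have hβ' : γ + β + -a i = γ + ∑ j ∈ T.erase i, a j := by
        rw [hβ, ← Finset.add_sum_erase T a hiT]
        abel
      by_cases hz : (∑ j ∈ T.erase i, a j) = 0
      · -- then β = a i, so γ + a i = γ + β ∈ Φ
        have : β = a i := by
          rw [hβ, ← Finset.add_sum_erase T a hiT, hz, add_zero]
        exact (hcon i hiT).1 (by rwa [← this])
      · have hmem : γ + ∑ j ∈ T.erase i, a j ∈ D.Φ := by rwa [hβ'] at h
        obtain ⟨j, hjT, hj⟩ := IH (T.erase i) (Finset.erase_ssubset hiT) a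
          (fun j hj => haT j (Finset.mem_of_mem_erase hj)) γ hγ hz hmem
        rcases hj with hj | hj
        · exact (hcon j (Finset.mem_of_mem_erase hjT)).1 hj
        · exact (hcon j (Finset.mem_of_mem_erase hjT)).2 hj
    · -- γ + β = a i, so γ = -∑_{j≠i} a j
      have hγ_eq : γ = -∑ j ∈ T.erase i, a j := by
        have h1 : γ + β = a i := by linear_combination (norm := abel) h
        rw [hβ, ← Finset.add_sum_erase T a hiT] at h1
        linear_combination (norm := abel) h1
      have : (inner ℝ γ γ : ℝ) ≤ 0 := by
        nth_rewrite 2 [hγ_eq]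
        rw [inner_neg_right, inner_sum]
        have : (0:ℝ) ≤ ∑ j ∈ T.erase i, (inner ℝ γ (a j) : ℝ) :=
          Finset.sum_nonneg fun j hj => hge0 j (Finset.mem_of_mem_erase hj)
        linarith
      linarith

theorem statement0 {V : Type*} [NormedAddCommGroup V] [InnerProductSpace ℝ V]
    (D : RootSystemData V) (r : ℕ) (hr : 0 < r) (a : Fin r → V)
    (ha : ∀ i, a i ∈ D.Φ) (α : V) (hα : α ∈ D.Φ) (hsum : ∑ i, a i = α) :
    a ⟨0, hr⟩ = α ∨
      ∃ i : Fin r, 0 < (i : ℕ) ∧ (a ⟨0, hr⟩ + a i ∈ D.Φ ∨ a ⟨0, hr⟩ + a i = 0) := by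
  by_cases h0 : a ⟨0, hr⟩ = α
  · exact Or.inl h0
  · right
    set z : Fin r := ⟨0, hr⟩ with hz
    have hsplit : a z + ∑ i ∈ Finset.univ.erase z, a i = α := by
      rw [Finset.add_sum_erase Finset.univ a (Finset.mem_univ z), hsum]
    have hne : (∑ i ∈ Finset.univ.erase z, a i) ≠ 0 := by
      intro hzero
      rw [hzero, add_zero] at hsplit
      exact h0 hsplit
    have hmem : a z + ∑ i ∈ Finset.univ.erase z, a i ∈ D.Φ := by rwa [hsplit]
    obtain ⟨i, hiT, hi⟩ := claim_lemma D (Finset.univ.erase z) a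
      (fun i _ => ha i) (a z) (ha z) hne hmem
    refine ⟨i, ?_, hi⟩
    have : i ≠ z := Finset.ne_of_mem_erase hiT
    have : (i : ℕ) ≠ 0 := fun hc => this (Fin.ext hc)
    omega
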